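/- Let A be a Banach Q_p-algebra and let X = Spa of the relative open unit polydisc of dimension d over A with coordinates t_1, …, t_d. Let 𝔫 be the abelian Lie algebra of rank d over A acting on the Fréchet algebra O(X) by the derivations ∂/∂t_1, …, ∂/∂t_d. Then the Lie algebra cohomology RΓ(𝔫, O(X)) is concentrated in degree 0 and equals A, i.e., the de Rham-type complex 0 → O(X) → O(X)^d → ⋯ → O(X) → 0 given by the Koszul complex of the commuting derivations ∂/∂t_i is a resolution of A. -/

import Mathlib

open Filter

/-!
STATEMENT 10: Let `A` be a Banach `ℚ_p`-algebra and `X` the relative open unit polydisc of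
dimension `d` over `A`, with coordinates `t_1, …, t_d`.  Let the abelian Lie algebra `𝔫` of
rank `d` act on the Fréchet algebra `O(X)` by the derivations `∂/∂t_i`.  Then
`RΓ(𝔫, O(X)) = A[0]`: the Koszul complex `0 → O(X) → O(X)^d → ⋯ → O(X) → 0` of the
commuting derivations `∂/∂t_i` is a resolution of `A`.

`O(X)` is the space of power series `∑ a_α t^α` with `‖a_α‖ r^{|α|} → 0` for all `r < 1`
(the predicate `IsConvergent` below), viewed inside `MvPowerSeries (Fin d) A`.  The Lie
algebra cohomology of the abelian Lie algebra `𝔫` acting by the commuting derivations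
`∂/∂t_i` is computed by the Koszul complex, whose `k`-th term is indexed by the `k`-element
subsets of `Fin d` and whose differential is `koszulD` below.
-/

/-- The formal partial derivative `∂/∂t_i` on multivariate power series. -/
noncomputable def pderivPS {A : Type*} [NormedCommRing A] {d : ℕ} (i : Fin d)
    (f : MvPowerSeries (Fin d) A) : MvPowerSeries (Fin d) A :=
  fun α => (α i + 1 : ℕ) • MvPowerSeries.coeff (R := A) (α + Finsupp.single i 1) f

/-- `f ∈ O(X)`: the coefficients of `f` tend to zero with respect to every radius `r < 1`. -/
def IsConvergent {A : Type*} [NormedCommRing A] {d : ℕ}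
    (f : MvPowerSeries (Fin d) A) : Prop :=
  ∀ r : ℝ, 0 ≤ r → r < 1 →
    Tendsto (fun α : Fin d →₀ ℕ => ‖MvPowerSeries.coeff (R := A) α f‖ * r ^ (α.sum fun _ n => n))
      cofinite (nhds 0)

/-- The Koszul differential for the commuting derivations `∂/∂t_i`. -/
noncomputable def koszulD {A : Type*} [NormedCommRing A] {d : ℕ} (k : ℕ)
    (ω : {s : Finset (Fin d) // s.card = k} → MvPowerSeries (Fin d) A) :
    {s : Finset (Fin d) // s.card = k + 1} → MvPowerSeries (Fin d) A :=
  fun s => ∑ i ∈ s.1.attach,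
    ((-1 : ℤ) ^ (s.1.filter (fun b => b < i.1)).card) •
      pderivPS i.1 (ω ⟨s.1.erase i.1, by rw [Finset.card_erase_of_mem i.2, s.2]; rfl⟩)

namespace S10

open Finset

variable {d : ℕ}

/-- total degree of a multi-index -/
def msz (α : Fin d →₀ ℕ) : ℕ := α.sum fun _ n => n

lemma msz_add (α β : Fin d →₀ ℕ) : msz (α + β) = msz α + msz β :=
  Finsupp.sum_add_index' (fun _ => rfl) (fun _ _ _ => rfl)

lemma msz_single (i : Fin d) : msz (Finsupp.single i 1) = 1 := by
  simp [msz]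

lemma msz_eq_sum (α : Fin d →₀ ℕ) : msz α = ∑ i : Fin d, α i :=
  Finsupp.sum_fintype _ _ fun _ => rfl

def sgnZ (s : Finset (Fin d)) (i : Fin d) : ℤ := (-1) ^ (s.filter (fun b => b < i)).card

lemma sgnZ_erase (s : Finset (Fin d)) (i : Fin d) : sgnZ (s.erase i) i = sgnZ s i := by
  unfold sgnZ
  rw [Finset.filter_erase, Finset.erase_eq_of_notMem (by simp)]

lemma sgnZ_insert (s : Finset (Fin d)) (j : Fin d) : sgnZ (insert j s) j = sgnZ s j := by
  unfold sgnZ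
  rw [Finset.filter_insert, if_neg (lt_irrefl j)]

lemma sgnZ_sq (s : Finset (Fin d)) (i : Fin d) : sgnZ s i * sgnZ s i = 1 := by
  unfold sgnZ
  rw [← pow_add]
  exact Even.neg_one_pow ⟨_, rfl⟩

lemma sgnZ_key {s : Finset (Fin d)} {i j : Fin d} (hi : i ∈ s) (hj : j ∉ s) :
    sgnZ s i * sgnZ (s.erase i) j = -(sgnZ (insert j s) i * sgnZ (insert j s) j) := by
  have hij : i ≠ j := fun h => hj (h ▸ hi)
  unfold sgnZ
  rw [Finset.filter_erase, Finset.filter_insert, Finset.filter_insert,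
    if_neg (lt_irrefl j)]
  rcases lt_or_gt_of_ne hij with h | h
  · rw [if_neg (asymm h), Finset.card_erase_of_mem (by simp [hi, h])]
    have hc : 0 < (s.filter (fun b => b < j)).card :=
      Finset.card_pos.mpr ⟨i, by simp [hi, h]⟩
    obtain ⟨m, hm⟩ : ∃ m, (s.filter (fun b => b < j)).card = m + 1 :=
      ⟨_ - 1, (Nat.succ_pred_eq_of_pos hc).symm⟩
    rw [hm]
    simp [pow_succ]
  · rw [if_pos h, Finset.erase_eq_of_notMem (by simp [asymm h]),
      Finset.card_insert_of_notMem (by simp [hj])]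
    simp [pow_succ]

variable {p : ℕ} [Fact p.Prime]

lemma norm_natCast_inv_le (n : ℕ) : ‖((n : ℚ_[p]))⁻¹‖ ≤ (n : ℝ) := by
  rcases Nat.eq_zero_or_pos n with h | h
  · simp [h]
  · have hn0 : (n : ℚ_[p]) ≠ 0 := Nat.cast_ne_zero.mpr h.ne'
    have hplt : (1 : ℝ) < (p : ℝ) := by
      exact_mod_cast (Fact.out : p.Prime).one_lt
    have hp0 : (0 : ℝ) < (p : ℝ) := lt_trans one_pos hplt
    have key : ((n : ℝ))⁻¹ ≤ ‖(n : ℚ_[p])‖ := by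
      rw [Padic.norm_eq_zpow_neg_valuation hn0, Padic.valuation_natCast]
      have hdvd : (p : ℕ) ^ (padicValNat p n) ∣ n := pow_padicValNat_dvd
      have hle : ((p : ℝ)) ^ (padicValNat p n) ≤ (n : ℝ) := by
        exact_mod_cast Nat.cast_le.mpr (Nat.le_of_dvd h hdvd)
      rw [zpow_neg, zpow_natCast]
      exact inv_anti₀ (by positivity) (by exact_mod_cast hle)
    rw [norm_inv]
    have hnpos : (0 : ℝ) < ((n : ℝ))⁻¹ := by positivity
    calc ‖(n : ℚ_[p])‖⁻¹ ≤ (((n : ℝ))⁻¹)⁻¹ := inv_anti₀ hnpos key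
    _ = (n : ℝ) := inv_inv _

lemma tendsto_gate {F : (Fin d →₀ ℕ) → ℝ} (h : Tendsto F cofinite (nhds 0)) (i : Fin d) :
    Tendsto (fun β : Fin d →₀ ℕ => if β i = 0 then 0 else F (β - Finsupp.single i 1))
      cofinite (nhds 0) := by
  rw [Filter.tendsto_def] at h ⊢
  intro U hU
  have h0 : (0 : ℝ) ∈ U := mem_of_mem_nhds hU
  have h1 := h U hU
  rw [Filter.mem_cofinite] at h1 ⊢
  apply Set.Finite.subset (h1.image (fun β => β + Finsupp.single i 1))
  intro β hβ
  simp only [Set.mem_compl_iff, Set.mem_preimage] at hβ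
  by_cases hb : β i = 0
  · exact absurd h0 (by simpa [hb] using hβ)
  · rw [if_neg hb] at hβ
    refine ⟨β - Finsupp.single i 1, hβ, ?_⟩
    exact tsub_add_cancel_of_le (Finsupp.single_le_iff.mpr (Nat.one_le_iff_ne_zero.mpr hb))

lemma geom_bound (k : ℕ) {x r' : ℝ} (hx0 : 0 ≤ x) (hx1 : x < 1) :
    ∃ C : ℝ, 0 ≤ C ∧ ∀ n : ℕ, ((n + k : ℕ) : ℝ) * x ^ n * r' ≤ C := by
  have h1 : Tendsto (fun n : ℕ => ((n + k : ℕ) : ℝ) * x ^ n * r') atTop (nhds 0) := by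
    have ha : Tendsto (fun n : ℕ => (n : ℝ) ^ 1 * x ^ n) atTop (nhds 0) :=
      (summable_pow_mul_geometric_of_norm_lt_one (R := ℝ) 1
        (by rwa [Real.norm_of_nonneg hx0])).tendsto_atTop_zero
    have hb : Tendsto (fun n : ℕ => x ^ n) atTop (nhds 0) :=
      tendsto_pow_atTop_nhds_zero_of_lt_one hx0 hx1
    have := ((ha.add (hb.const_mul (k : ℝ))).mul_const r')
    simp only [add_zero, zero_add, mul_zero, zero_mul] at this
    refine Tendsto.congr (fun n => ?_) this
    push_cast
    ring
  obtain ⟨C0, hC0⟩ := h1.bddAbove_range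
  refine ⟨max C0 0, le_max_right _ _, fun n => ?_⟩
  exact le_trans (hC0 ⟨n, rfl⟩) (le_max_left _ _)

variable {A : Type*} [NormedCommRing A] [NormedAlgebra ℚ_[p] A]

/-- unbundled version of a Koszul cochain -/
noncomputable def Om {k : ℕ} (ω : {s : Finset (Fin d) // s.card = k} → MvPowerSeries (Fin d) A) :
    Finset (Fin d) → MvPowerSeries (Fin d) A :=
  fun t => if h : t.card = k then ω ⟨t, h⟩ else 0

lemma Om_eq {k : ℕ} (ω : {s : Finset (Fin d) // s.card = k} → MvPowerSeries (Fin d) A)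
    {t : Finset (Fin d)} (h : t.card = k) : Om ω t = ω ⟨t, h⟩ := dif_pos h

/-- the contracting homotopy (weighted interior product with the Euler field) -/
noncomputable def EtaF (p : ℕ) [Fact p.Prime] {A : Type*} [NormedCommRing A] [NormedAlgebra ℚ_[p] A] (k : ℕ)
    (ω : {s : Finset (Fin d) // s.card = k + 1} → MvPowerSeries (Fin d) A) :
    Finset (Fin d) → MvPowerSeries (Fin d) A :=
  fun t β => (((msz β + k : ℕ) : ℚ_[p]))⁻¹ •
    ∑ j ∈ tᶜ, ((sgnZ t j : ℤ) : ℚ_[p]) •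
      (if β j = 0 then 0 else Om ω (insert j t) (β - Finsupp.single j 1))

lemma koszulD_apply {k : ℕ} (ω : {s : Finset (Fin d) // s.card = k} → MvPowerSeries (Fin d) A)
    {s : Finset (Fin d)} (hs : s.card = k + 1) (α : Fin d →₀ ℕ) :
    koszulD k ω ⟨s, hs⟩ α =
      ∑ i ∈ s, sgnZ s i • ((α i + 1 : ℕ) • Om ω (s.erase i) (α + Finsupp.single i 1)) := by
  have : koszulD k ω ⟨s, hs⟩ α = MvPowerSeries.coeff (R := A) α (koszulD k ω ⟨s, hs⟩) := rfl
  rw [this]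
  unfold koszulD
  rw [map_sum, ← Finset.sum_attach s
    (fun i => sgnZ s i • ((α i + 1 : ℕ) • Om ω (s.erase i) (α + Finsupp.single i 1)))]
  refine Finset.sum_congr rfl fun i _ => ?_
  rw [map_zsmul]
  congr 1
  rw [Om_eq ω (by rw [Finset.card_erase_of_mem i.2, hs]; rfl)]
  rfl

/-- scalar coefficient in the expanded double sum -/
noncomputable def Qc (p : ℕ) [Fact p.Prime] (s : Finset (Fin d)) (α : Fin d →₀ ℕ) (i j : Fin d) : ℚ_[p] :=
  (sgnZ s i : ℚ_[p]) * ((α i + 1 : ℕ) : ℚ_[p]) * (sgnZ (s.erase i) j : ℚ_[p])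

/-- the gated shifted coefficient in the expanded double sum -/
noncomputable def Gc {k : ℕ} (ω : {s : Finset (Fin d) // s.card = k + 1} → MvPowerSeries (Fin d) A)
    (s : Finset (Fin d)) (α : Fin d →₀ ℕ) (i j : Fin d) : A :=
  if (α + Finsupp.single i 1 : Fin d →₀ ℕ) j = 0 then 0
  else Om ω (insert j (s.erase i)) (α + Finsupp.single i 1 - Finsupp.single j 1)

lemma key (k : ℕ) (ω : {s : Finset (Fin d) // s.card = k + 1} → MvPowerSeries (Fin d) A)
    (hcl : koszulD (k + 1) ω = 0) :
    koszulD k (fun s' : {s : Finset (Fin d) // s.card = k} => EtaF p k ω s'.1) = ω := by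
  funext sc
  obtain ⟨s, hs⟩ := sc
  funext α
  rw [koszulD_apply _ hs α]
  have hW0 : ((msz α + k + 1 : ℕ) : ℚ_[p]) ≠ 0 := Nat.cast_ne_zero.mpr (by omega)
  have hOmEta : ∀ i ∈ s, Om (fun s' : {s : Finset (Fin d) // s.card = k} => EtaF p k ω s'.1)
      (s.erase i) = EtaF p k ω (s.erase i) := fun i hi =>
    Om_eq _ (by rw [Finset.card_erase_of_mem hi, hs]; rfl)
  -- Step 1: expand each summand
  have expand : ∀ i ∈ s,
      sgnZ s i • ((α i + 1 : ℕ) • EtaF p k ω (s.erase i) (α + Finsupp.single i 1))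
      = (((msz α + k + 1 : ℕ) : ℚ_[p]))⁻¹ • ∑ j ∈ (s.erase i)ᶜ,
          Qc p s α i j • Gc ω s α i j := by
    intro i hi
    simp only [EtaF, Qc, Gc]
    have hms : msz (α + Finsupp.single i 1) + k = msz α + k + 1 := by
      rw [msz_add, msz_single]; omega
    rw [hms, ← Int.cast_smul_eq_zsmul ℚ_[p] (sgnZ s i),
      ← Nat.cast_smul_eq_nsmul ℚ_[p] (α i + 1), smul_smul, smul_smul,
      Finset.smul_sum, Finset.smul_sum]
    refine Finset.sum_congr rfl fun j hj => ?_
    rw [smul_smul, smul_smul]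
    congr 1
    push_cast
    ring
  -- Step 2: the diagonal contribution
  have split : ∀ i ∈ s, ∑ j ∈ (s.erase i)ᶜ, Qc p s α i j • Gc ω s α i j
      = ((α i + 1 : ℕ) : ℚ_[p]) • (ω ⟨s, hs⟩ α) + ∑ j ∈ sᶜ, Qc p s α i j • Gc ω s α i j := by
    intro i hi
    rw [Finset.compl_erase, Finset.sum_insert (by simp [hi])]
    congr 1
    have h1 : (α + Finsupp.single i 1 : Fin d →₀ ℕ) i ≠ 0 := by
      simp [Finsupp.add_apply]
    have h3 : α + Finsupp.single i 1 - Finsupp.single i 1 = α := by simp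
    rw [Qc, Gc, if_neg h1, Finset.insert_erase hi, h3, Om_eq ω hs, sgnZ_erase]
    congr 1
    have hsq : ((sgnZ s i * sgnZ s i : ℤ) : ℚ_[p]) = 1 := by rw [sgnZ_sq]; norm_cast
    push_cast at hsq ⊢
    linear_combination ((α i : ℚ_[p]) + 1) * hsq
  -- Step 3: the off-diagonal contribution, using closedness
  have cross : ∀ j ∈ sᶜ, ∑ i ∈ s, Qc p s α i j • Gc ω s α i j
      = ((α j : ℕ) : ℚ_[p]) • (ω ⟨s, hs⟩ α) := by
    intro j hj
    have hjs : j ∉ s := Finset.mem_compl.mp hj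
    by_cases hαj : α j = 0
    · rw [hαj]
      simp only [Nat.cast_zero, zero_smul]
      refine Finset.sum_eq_zero fun i hi => ?_
      have hij : i ≠ j := fun h => hjs (h ▸ hi)
      have hz : (α + Finsupp.single i 1 : Fin d →₀ ℕ) j = 0 := by
        simp [Finsupp.add_apply, Finsupp.single_apply, hij, hαj]
      rw [Gc, if_pos hz, smul_zero]
    · -- closedness at the set `insert j s` and the index `α - e j`
      have hins : (insert j s).card = (k + 1) + 1 := by
        rw [Finset.card_insert_of_notMem hjs, hs]
      have hcl' : koszulD (k + 1) ω ⟨insert j s, hins⟩ (α - Finsupp.single j 1) = 0 := by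
        rw [hcl]; rfl
      rw [koszulD_apply ω hins (α - Finsupp.single j 1), Finset.sum_insert hjs] at hcl'
      have hle : Finsupp.single j 1 ≤ α :=
        Finsupp.single_le_iff.mpr (Nat.one_le_iff_ne_zero.mpr hαj)
      have e1 : (α - Finsupp.single j 1 : Fin d →₀ ℕ) j + 1 = α j := by
        rw [Finsupp.tsub_apply, Finsupp.single_eq_same]
        omega
      have e2 : α - Finsupp.single j 1 + Finsupp.single j 1 = α := tsub_add_cancel_of_le hle
      have e3 : (insert j s).erase j = s := Finset.erase_insert hjs
      rw [e1, e2, e3, Om_eq ω hs] at hcl'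
      have hterm : ∀ m ∈ s, sgnZ (insert j s) m •
            (((α - Finsupp.single j 1 : Fin d →₀ ℕ) m + 1 : ℕ) •
              Om ω ((insert j s).erase m) ((α - Finsupp.single j 1) + Finsupp.single m 1))
          = ((sgnZ (insert j s) m : ℚ_[p]) * ((α m + 1 : ℕ) : ℚ_[p])) •
              Om ω (insert j (s.erase m)) (α + Finsupp.single m 1 - Finsupp.single j 1) := by
        intro m hm
        have hmj : m ≠ j := fun h => hjs (h ▸ hm)
        have em1 : (α - Finsupp.single j 1 : Fin d →₀ ℕ) m = α m := by
          simp [Finsupp.tsub_apply, Finsupp.single_apply, Ne.symm hmj]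
        have em2 : (α - Finsupp.single j 1) + Finsupp.single m 1
            = α + Finsupp.single m 1 - Finsupp.single j 1 := tsub_add_eq_add_tsub hle
        have em3 : (insert j s).erase m = insert j (s.erase m) :=
          Finset.erase_insert_of_ne (fun h => hmj h.symm)
        rw [em1, em2, em3, ← Int.cast_smul_eq_zsmul ℚ_[p],
          ← Nat.cast_smul_eq_nsmul ℚ_[p] (α m + 1), smul_smul]
      rw [Finset.sum_congr rfl hterm, ← Int.cast_smul_eq_zsmul ℚ_[p] (sgnZ (insert j s) j),
        ← Nat.cast_smul_eq_nsmul ℚ_[p] (α j), smul_smul] at hcl'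
      have hsum := eq_neg_of_add_eq_zero_right hcl'
      -- now rewrite the target sum
      have hQG : ∀ i ∈ s, Qc p s α i j • Gc ω s α i j
          = (-(sgnZ (insert j s) j : ℚ_[p])) •
            (((sgnZ (insert j s) i : ℚ_[p]) * ((α i + 1 : ℕ) : ℚ_[p])) •
              Om ω (insert j (s.erase i)) (α + Finsupp.single i 1 - Finsupp.single j 1)) := by
        intro i hi
        have hij : i ≠ j := fun h => hjs (h ▸ hi)
        have hnz : (α + Finsupp.single i 1 : Fin d →₀ ℕ) j ≠ 0 := by
          rw [Finsupp.add_apply, Finsupp.single_apply, if_neg hij]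
          simpa using hαj
        rw [Qc, Gc, if_neg hnz, smul_smul]
        congr 1
        have hk := sgnZ_key hi hjs
        have hkq : ((sgnZ s i * sgnZ (s.erase i) j : ℤ) : ℚ_[p])
            = ((-(sgnZ (insert j s) i * sgnZ (insert j s) j) : ℤ) : ℚ_[p]) := by
          exact_mod_cast congrArg (fun z : ℤ => (z : ℚ_[p])) hk
        push_cast at hkq ⊢
        linear_combination ((α i : ℚ_[p]) + 1) * hkq
      rw [Finset.sum_congr rfl hQG, ← Finset.smul_sum, hsum, smul_neg, smul_smul]
      have hsq : ((sgnZ (insert j s) j * sgnZ (insert j s) j : ℤ) : ℚ_[p]) = 1 := by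
        rw [sgnZ_sq]; norm_cast
      have hscal : (-(-(sgnZ (insert j s) j : ℚ_[p]) *
          ((sgnZ (insert j s) j : ℚ_[p]) * ((α j : ℕ) : ℚ_[p]))))
          = ((α j : ℕ) : ℚ_[p]) := by
        push_cast at hsq ⊢
        linear_combination ((α j : ℚ_[p])) * hsq
      rw [← neg_smul, hscal]
  -- Step 4: assemble
  calc ∑ i ∈ s, sgnZ s i • ((α i + 1 : ℕ) •
        Om (fun s' : {s : Finset (Fin d) // s.card = k} => EtaF p k ω s'.1) (s.erase i)
          (α + Finsupp.single i 1))
      = ∑ i ∈ s, (((msz α + k + 1 : ℕ) : ℚ_[p]))⁻¹ •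
          ∑ j ∈ (s.erase i)ᶜ, Qc p s α i j • Gc ω s α i j :=
        Finset.sum_congr rfl fun i hi => by rw [hOmEta i hi]; exact expand i hi
    _ = (((msz α + k + 1 : ℕ) : ℚ_[p]))⁻¹ •
          ∑ i ∈ s, ∑ j ∈ (s.erase i)ᶜ, Qc p s α i j • Gc ω s α i j := by
        rw [Finset.smul_sum]
    _ = (((msz α + k + 1 : ℕ) : ℚ_[p]))⁻¹ •
          (∑ i ∈ s, (((α i + 1 : ℕ) : ℚ_[p]) • (ω ⟨s, hs⟩ α))
            + ∑ i ∈ s, ∑ j ∈ sᶜ, Qc p s α i j • Gc ω s α i j) := by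
        rw [← Finset.sum_add_distrib]
        congr 1
        exact Finset.sum_congr rfl split
    _ = (((msz α + k + 1 : ℕ) : ℚ_[p]))⁻¹ •
          ((∑ i ∈ s, ((α i + 1 : ℕ) : ℚ_[p])) • (ω ⟨s, hs⟩ α)
            + (∑ j ∈ sᶜ, ((α j : ℕ) : ℚ_[p])) • (ω ⟨s, hs⟩ α)) := by
        congr 1
        rw [Finset.sum_smul, Finset.sum_smul, Finset.sum_comm]
        congr 1
        exact Finset.sum_congr rfl cross
    _ = (((msz α + k + 1 : ℕ) : ℚ_[p]))⁻¹ •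
          (((msz α + k + 1 : ℕ) : ℚ_[p]) • (ω ⟨s, hs⟩ α)) := by
        congr 1
        rw [← add_smul]
        congr 1
        have h23 : ((msz α : ℕ) : ℚ_[p]) = (∑ i ∈ s, ((α i : ℕ) : ℚ_[p])) + ∑ j ∈ sᶜ, ((α j : ℕ) : ℚ_[p]) := by
          rw [Finset.sum_add_sum_compl, msz_eq_sum]
          push_cast
          rfl
        push_cast at h23 ⊢
        rw [Finset.sum_add_distrib, Finset.sum_const, hs, nsmul_eq_mul]
        push_cast
        linear_combination -h23
    _ = ω ⟨s, hs⟩ α := inv_smul_smul₀ hW0 _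

lemma isConvergent_zero : IsConvergent (0 : MvPowerSeries (Fin d) A) := by
  intro r _ _
  have : (fun α : Fin d →₀ ℕ => ‖MvPowerSeries.coeff (R := A) α (0 : MvPowerSeries (Fin d) A)‖
      * r ^ (α.sum fun _ n => n)) = fun _ => 0 := by
    funext α
    simp
  rw [this]
  exact tendsto_const_nhds

lemma isConvergent_Om {k : ℕ} (ω : {s : Finset (Fin d) // s.card = k} → MvPowerSeries (Fin d) A)
    (hω : ∀ s, IsConvergent (ω s)) (t : Finset (Fin d)) : IsConvergent (Om ω t) := by
  by_cases h : t.card = k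
  · rw [Om_eq ω h]; exact hω _
  · unfold Om; rw [dif_neg h]; exact isConvergent_zero

lemma etaF_isConvergent (k : ℕ)
    (ω : {s : Finset (Fin d) // s.card = k + 1} → MvPowerSeries (Fin d) A)
    (hω : ∀ s, IsConvergent (ω s)) (t : Finset (Fin d)) :
    IsConvergent (EtaF p k ω t) := by
  intro r hr0 hr1
  set r' : ℝ := (1 + r) / 2 with hr'def
  have hr'0 : 0 < r' := by rw [hr'def]; linarith
  have hrr' : r < r' := by rw [hr'def]; linarith
  have hr'1 : r' < 1 := by rw [hr'def]; linarith
  set x : ℝ := r / r' with hxdef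
  have hx0 : 0 ≤ x := div_nonneg hr0 hr'0.le
  have hx1 : x < 1 := (div_lt_one hr'0).mpr hrr'
  have hr_eq : r = x * r' := by rw [hxdef, div_mul_cancel₀ r hr'0.ne']
  obtain ⟨C, hC0, hC⟩ := geom_bound (k := k) (r' := r') hx0 hx1
  have hbound : ∀ β : Fin d →₀ ℕ,
      ‖MvPowerSeries.coeff (R := A) β (EtaF p k ω t)‖ * r ^ (β.sum fun _ n => n)
      ≤ ∑ j ∈ tᶜ, C * (if β j = 0 then 0
          else ‖MvPowerSeries.coeff (R := A) (β - Finsupp.single j 1) (Om ω (insert j t))‖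
            * r' ^ ((β - Finsupp.single j 1 : Fin d →₀ ℕ).sum fun _ n => n)) := by
    intro β
    have h1 : ‖MvPowerSeries.coeff (R := A) β (EtaF p k ω t)‖
        ≤ ((msz β + k : ℕ) : ℝ) * ∑ j ∈ tᶜ,
            ‖(if β j = 0 then (0 : A) else Om ω (insert j t) (β - Finsupp.single j 1))‖ := by
      have h2 : ‖MvPowerSeries.coeff (R := A) β (EtaF p k ω t)‖
          = ‖(((msz β + k : ℕ) : ℚ_[p]))⁻¹ • ∑ j ∈ tᶜ, ((sgnZ t j : ℤ) : ℚ_[p]) •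
              (if β j = 0 then (0 : A) else Om ω (insert j t) (β - Finsupp.single j 1))‖ := rfl
      rw [h2]
      calc ‖(((msz β + k : ℕ) : ℚ_[p]))⁻¹ • ∑ j ∈ tᶜ, ((sgnZ t j : ℤ) : ℚ_[p]) •
              (if β j = 0 then (0 : A) else Om ω (insert j t) (β - Finsupp.single j 1))‖
          ≤ ‖(((msz β + k : ℕ) : ℚ_[p]))⁻¹‖ * ‖∑ j ∈ tᶜ, ((sgnZ t j : ℤ) : ℚ_[p]) •
              (if β j = 0 then (0 : A) else Om ω (insert j t) (β - Finsupp.single j 1))‖ :=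
            norm_smul_le _ _
        _ ≤ ((msz β + k : ℕ) : ℝ) * ‖∑ j ∈ tᶜ, ((sgnZ t j : ℤ) : ℚ_[p]) •
              (if β j = 0 then (0 : A) else Om ω (insert j t) (β - Finsupp.single j 1))‖ :=
            mul_le_mul_of_nonneg_right (norm_natCast_inv_le _) (norm_nonneg _)
        _ ≤ ((msz β + k : ℕ) : ℝ) * ∑ j ∈ tᶜ,
              ‖(if β j = 0 then (0 : A) else Om ω (insert j t) (β - Finsupp.single j 1))‖ := by
            refine mul_le_mul_of_nonneg_left ?_ (by positivity)
            refine le_trans (norm_sum_le _ _) (Finset.sum_le_sum fun j hj => ?_)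
            refine le_trans (norm_smul_le _ _) ?_
            have := Padic.norm_int_le_one (p := p) (sgnZ t j)
            nlinarith [norm_nonneg (if β j = 0 then (0 : A)
              else Om ω (insert j t) (β - Finsupp.single j 1))]
    calc ‖MvPowerSeries.coeff (R := A) β (EtaF p k ω t)‖ * r ^ (β.sum fun _ n => n)
        ≤ (((msz β + k : ℕ) : ℝ) * ∑ j ∈ tᶜ,
            ‖(if β j = 0 then (0 : A) else Om ω (insert j t) (β - Finsupp.single j 1))‖)
            * r ^ (β.sum fun _ n => n) :=
          mul_le_mul_of_nonneg_right h1 (pow_nonneg hr0 _)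
      _ = (((msz β + k : ℕ) : ℝ) * ∑ j ∈ tᶜ,
            ‖(if β j = 0 then (0 : A) else Om ω (insert j t) (β - Finsupp.single j 1))‖)
            * r ^ msz β := rfl
      _ = ∑ j ∈ tᶜ, ((msz β + k : ℕ) : ℝ) * r ^ msz β *
            ‖(if β j = 0 then (0 : A) else Om ω (insert j t) (β - Finsupp.single j 1))‖ := by
          rw [Finset.mul_sum, Finset.sum_mul]
          exact Finset.sum_congr rfl fun j hj => by ring
      _ ≤ _ := by
          refine Finset.sum_le_sum fun j hj => ?_
          by_cases hz : β j = 0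
          · rw [if_pos hz, if_pos hz, norm_zero, mul_zero, mul_zero]
          · rw [if_neg hz, if_neg hz]
            have hle : Finsupp.single j 1 ≤ β :=
              Finsupp.single_le_iff.mpr (Nat.one_le_iff_ne_zero.mpr hz)
            have hmsz : msz β = msz (β - Finsupp.single j 1) + 1 := by
              conv_lhs => rw [← tsub_add_cancel_of_le hle]
              rw [msz_add, msz_single]
            set n : ℕ := msz (β - Finsupp.single j 1) with hn
            set N : ℝ := ‖Om ω (insert j t) (β - Finsupp.single j 1)‖ with hNdef
            have hN0 : 0 ≤ N := norm_nonneg _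
            have hcoeff : ‖MvPowerSeries.coeff (R := A) (β - Finsupp.single j 1)
                (Om ω (insert j t))‖ = N := rfl
            have hexp : ((β - Finsupp.single j 1 : Fin d →₀ ℕ).sum fun _ n => n) = n := rfl
            rw [hcoeff, hexp]
            calc ((msz β + k : ℕ) : ℝ) * r ^ msz β * N
                = (((n + 1 + k : ℕ)) : ℝ) * x ^ (n + 1) * r' * (N * r' ^ n) := by
                  rw [hmsz, hr_eq, mul_pow, pow_succ]
                  push_cast
                  ring
              _ ≤ C * (N * r' ^ n) := by
                  refine mul_le_mul_of_nonneg_right ?_ (by positivity)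
                  exact hC (n + 1)
  refine squeeze_zero (fun β => mul_nonneg (norm_nonneg _) (pow_nonneg hr0 _)) hbound ?_
  have hzero : (0 : ℝ) = ∑ j ∈ tᶜ, (0 : ℝ) := by simp
  rw [hzero]
  refine tendsto_finset_sum _ fun j hj => ?_
  have hOm := isConvergent_Om ω hω (insert j t) r' hr'0.le hr'1
  have hg := tendsto_gate hOm j
  simpa using hg.const_mul C

theorem statement10' {A : Type*} [NormedCommRing A]
    [NormedAlgebra ℚ_[p] A] [CompleteSpace A] {d : ℕ} :
    Function.Injective (MvPowerSeries.C (σ := Fin d) (R := A)) ∧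
    (∀ f : MvPowerSeries (Fin d) A, IsConvergent f →
      ((∀ i : Fin d, pderivPS i f = 0) ↔ ∃ a : A, f = MvPowerSeries.C (σ := Fin d) (R := A) a)) ∧
    (∀ (k : ℕ) (ω : {s : Finset (Fin d) // s.card = k + 1} → MvPowerSeries (Fin d) A),
      (∀ s, IsConvergent (ω s)) → koszulD (k + 1) ω = 0 →
      ∃ η : {s : Finset (Fin d) // s.card = k} → MvPowerSeries (Fin d) A,
        (∀ s, IsConvergent (η s)) ∧ koszulD k η = ω) := by
  refine ⟨?_, ?_, ?_⟩
  · intro a b h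
    have := congrArg (MvPowerSeries.coeff (R := A) (0 : Fin d →₀ ℕ)) h
    simpa using this
  · intro f _
    constructor
    · intro hder
      refine ⟨MvPowerSeries.coeff (R := A) 0 f, ?_⟩
      ext β
      rcases eq_or_ne β 0 with hβ | hβ
      · subst hβ
        simp
      · have hi : ∃ i : Fin d, β i ≠ 0 := by
          by_contra hcon
          push_neg at hcon
          exact hβ (Finsupp.ext hcon)
        obtain ⟨i, hi⟩ := hi
        have hle : Finsupp.single i 1 ≤ β :=
          Finsupp.single_le_iff.mpr (Nat.one_le_iff_ne_zero.mpr hi)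
        have h0 : pderivPS i f (β - Finsupp.single i 1) = 0 := by
          rw [hder i]
          rfl
        have e1 : (β - Finsupp.single i 1 : Fin d →₀ ℕ) i + 1 = β i := by
          rw [Finsupp.tsub_apply, Finsupp.single_eq_same]
          omega
        have e2 : (β - Finsupp.single i 1) + Finsupp.single i 1 = β := tsub_add_cancel_of_le hle
        have h2 : ((β - Finsupp.single i 1 : Fin d →₀ ℕ) i + 1) •
            MvPowerSeries.coeff (R := A) ((β - Finsupp.single i 1) + Finsupp.single i 1) f = 0 := h0
        rw [e1, e2] at h2
        have h3 : ((β i : ℕ) : ℚ_[p]) • MvPowerSeries.coeff (R := A) β f = 0 := by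
          rw [Nat.cast_smul_eq_nsmul]
          exact h2
        have h4 := congrArg (fun z : A => (((β i : ℕ) : ℚ_[p]))⁻¹ • z) h3
        simp only [smul_smul, smul_zero] at h4
        rw [inv_mul_cancel₀ (Nat.cast_ne_zero.mpr hi), one_smul] at h4
        rw [h4, MvPowerSeries.coeff_C, if_neg hβ]
    · rintro ⟨a, rfl⟩ i
      funext β
      have hne : (β + Finsupp.single i 1 : Fin d →₀ ℕ) ≠ 0 := by
        intro h
        have : (β + Finsupp.single i 1 : Fin d →₀ ℕ) i = 0 := by rw [h]; rfl
        simp at this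
      show (β i + 1 : ℕ) • MvPowerSeries.coeff (R := A) (β + Finsupp.single i 1)
        (MvPowerSeries.C (σ := Fin d) (R := A) a) = 0
      rw [MvPowerSeries.coeff_C, if_neg hne, smul_zero]
  · intro k ω hconv hclosed
    exact ⟨fun s' => EtaF p k ω s'.1,
      fun s' => etaF_isConvergent k ω hconv s'.1, key k ω hclosed⟩

end S10

theorem statement10 {p : ℕ} [Fact p.Prime] {A : Type*} [NormedCommRing A]
    [NormedAlgebra ℚ_[p] A] [CompleteSpace A] {d : ℕ} :
    -- the augmentation A → O(X) is injective …
    Function.Injective (MvPowerSeries.C (σ := Fin d) (R := A)) ∧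
    -- … with image exactly the kernel of the 0-th Koszul differential (∂_1, …, ∂_d):
    (∀ f : MvPowerSeries (Fin d) A, IsConvergent f →
      ((∀ i : Fin d, pderivPS i f = 0) ↔ ∃ a : A, f = MvPowerSeries.C (σ := Fin d) (R := A) a)) ∧
    -- and the Koszul complex is exact in all positive degrees:
    (∀ (k : ℕ) (ω : {s : Finset (Fin d) // s.card = k + 1} → MvPowerSeries (Fin d) A),
      (∀ s, IsConvergent (ω s)) → koszulD (k + 1) ω = 0 →
      ∃ η : {s : Finset (Fin d) // s.card = k} → MvPowerSeries (Fin d) A,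
        (∀ s, IsConvergent (η s)) ∧ koszulD k η = ω) := by
  exact S10.statement10' (p := p)
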